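/- arXiv:cs/0605006 — 3 statements merged into one kernel-verified Lean document; each statement's English description precedes it below -/
import Mathlib

section
/- The spectral inf-mutual information rate is nonnegative: for any general sources X = {X_n} and Y = {Y_n} on finite alphabets, p-liminf_{n→∞} (1/n)·ln(P_{X_nY_n}(X_n,Y_n)/(P_{X_n}(X_n)·P_{Y_n}(Y_n))) ≥ 0. -/
open Filter

/-- Limit inferior in probability for random variables on finite alphabets. -/
noncomputable def pLimInfP {α : ℕ → Type} [∀ n, Fintype (α n)]
    (p : ∀ n, α n → ℝ) (Z : ∀ n, α n → ℝ) : EReal :=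
  sSup (Real.toEReal '' {a : ℝ |
    Tendsto (fun n => ∑ x : α n, if Z n x < a then p n x else 0) atTop (nhds 0)})

/-- the spectral inf-mutual information rate is nonnegative. -/
theorem stmt_5 {X Y : ℕ → Type} [∀ n, Fintype (X n)] [∀ n, Fintype (Y n)]
    (p : ∀ n, X n × Y n → ℝ)
    (hp0 : ∀ n z, 0 ≤ p n z) (hp1 : ∀ n, ∑ z, p n z = 1) :
    (0 : EReal) ≤ pLimInfP p (fun n z =>
      (1 / (n : ℝ)) * Real.log
        (p n z / ((∑ y : Y n, p n (z.1, y)) * (∑ x : X n, p n (x, z.2))))) := by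
  set Z : ∀ n, X n × Y n → ℝ := fun n z =>
      (1 / (n : ℝ)) * Real.log
        (p n z / ((∑ y : Y n, p n (z.1, y)) * (∑ x : X n, p n (x, z.2)))) with hZdef
  have key : ∀ a : ℝ, a < 0 →
      Tendsto (fun n => ∑ z : X n × Y n, if Z n z < a then p n z else 0) atTop (nhds 0) := by
    intro a ha
    have hexp : Tendsto (fun n : ℕ => Real.exp (a * (n : ℝ))) atTop (nhds 0) := by
      apply Real.tendsto_exp_atBot.comp
      have := Tendsto.atTop_mul_const_of_neg (f := fun n : ℕ => (n : ℝ))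
        (l := atTop) ha tendsto_natCast_atTop_atTop
      simpa [mul_comm] using this
    apply squeeze_zero' ?_ ?_ hexp
    · filter_upwards with n
      refine Finset.sum_nonneg fun z _ => ?_
      split
      · exact hp0 n z
      · exact le_refl 0
    · filter_upwards [eventually_ge_atTop 1] with n hn
      have hn0 : (0 : ℝ) < (n : ℝ) := by exact_mod_cast Nat.pos_of_ne_zero (by omega)
      have hterm : ∀ z : X n × Y n, (if Z n z < a then p n z else 0) ≤
          Real.exp (a * (n : ℝ)) * ((∑ y : Y n, p n (z.1, y)) * (∑ x : X n, p n (x, z.2))) := by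
        intro z
        have hqx0 : (0:ℝ) ≤ ∑ y : Y n, p n (z.1, y) := Finset.sum_nonneg fun _ _ => hp0 n _
        have hqy0 : (0:ℝ) ≤ ∑ x : X n, p n (x, z.2) := Finset.sum_nonneg fun _ _ => hp0 n _
        split_ifs with hz
        · rcases eq_or_lt_of_le (hp0 n z) with h0 | h0
          · rw [← h0]
            positivity
          · have hzeta : p n (z.1, z.2) = p n z := by rw [Prod.mk.eta]
            have hqx : (0:ℝ) < ∑ y : Y n, p n (z.1, y) :=
              lt_of_lt_of_le h0 (hzeta ▸ Finset.single_le_sum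
                (fun y _ => hp0 n (z.1, y)) (Finset.mem_univ z.2))
            have hqy : (0:ℝ) < ∑ x : X n, p n (x, z.2) :=
              lt_of_lt_of_le h0 (hzeta ▸ Finset.single_le_sum
                (fun x _ => hp0 n (x, z.2)) (Finset.mem_univ z.1))
            have hr : (0:ℝ) < p n z / ((∑ y : Y n, p n (z.1, y)) * (∑ x : X n, p n (x, z.2))) :=
              div_pos h0 (mul_pos hqx hqy)
            set L : ℝ := Real.log (p n z / ((∑ y : Y n, p n (z.1, y)) *
                (∑ x : X n, p n (x, z.2)))) with hL
            have hzz : (n : ℝ)⁻¹ * L < a := by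
              have := hz
              rw [hZdef] at this
              simpa [one_div, hL] using this
            have hlog : L < a * (n : ℝ) := by
              have h4 := mul_lt_mul_of_pos_left hzz hn0
              rw [← mul_assoc, mul_inv_cancel₀ (ne_of_gt hn0), one_mul] at h4
              linarith [h4]
            have := (Real.log_lt_iff_lt_exp hr).mp hlog
            have := (div_lt_iff₀ (mul_pos hqx hqy)).mp this
            linarith
        · positivity
      calc ∑ z : X n × Y n, (if Z n z < a then p n z else 0)
          ≤ ∑ z : X n × Y n, Real.exp (a * (n : ℝ)) *
              ((∑ y : Y n, p n (z.1, y)) * (∑ x : X n, p n (x, z.2))) :=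
            Finset.sum_le_sum fun z _ => hterm z
        _ = Real.exp (a * (n : ℝ)) * ∑ z : X n × Y n,
              ((∑ y : Y n, p n (z.1, y)) * (∑ x : X n, p n (x, z.2))) := by
            rw [Finset.mul_sum]
        _ = Real.exp (a * (n : ℝ)) := by
            have h1 : ∑ z : X n × Y n,
                ((∑ y : Y n, p n (z.1, y)) * (∑ x : X n, p n (x, z.2)))
                = (∑ x : X n, ∑ y : Y n, p n (x, y)) * (∑ y : Y n, ∑ x : X n, p n (x, y)) := by
              rw [Fintype.sum_prod_type]
              rw [Finset.sum_mul_sum]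
            have h2 : ∑ x : X n, ∑ y : Y n, p n (x, y) = 1 := by
              rw [← Fintype.sum_prod_type]
              simpa using hp1 n
            have h3 : ∑ y : Y n, ∑ x : X n, p n (x, y) = 1 := by
              rw [Finset.sum_comm, ← Fintype.sum_prod_type]
              simpa using hp1 n
            rw [h1, h2, h3]
            ring
  have hmem : ∀ a : ℝ, a < 0 → (a : EReal) ≤ pLimInfP p Z := by
    intro a ha
    exact le_sSup ⟨a, key a ha, rfl⟩
  by_contra h
  push_neg at h
  obtain ⟨b, hb1, hb2⟩ := EReal.exists_between_coe_real h
  exact absurd (hmem b (by exact_mod_cast hb2)) (not_le.2 hb1)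
end

section
/- The generalized spectral inf-mutual information rate of a family is nonnegative: for any finite family of general sources (Z^{(m)})_{m∈A} on finite alphabets, p-liminf_{n→∞} (1/n)·ln(P_{(Z_n^{(m)})_{m∈A}}((Z_n^{(m)})_{m∈A}) / ∏_{m∈A} P_{Z_n^{(m)}}(Z_n^{(m)})) ≥ 0. -/
open Filter

/-- the generalized spectral inf-mutual information rate of a finite
family of general sources is nonnegative. The marginal of the `m`-th component is
`∑_{t' : t' m = t m} p n t'`. -/
theorem stmt_6 {ι : Type} [Fintype ι] [DecidableEq ι]
    {Z : ℕ → ι → Type} [∀ n m, Fintype (Z n m)] [∀ n m, DecidableEq (Z n m)]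
    (p : ∀ n, (∀ m, Z n m) → ℝ)
    (hp0 : ∀ n t, 0 ≤ p n t) (hp1 : ∀ n, ∑ t, p n t = 1) :
    (0 : EReal) ≤ pLimInfP p (fun n t =>
      (1 / (n : ℝ)) * Real.log
        (p n t / ∏ m, (∑ t' : ∀ m', Z n m', if t' m = t m then p n t' else 0))) := by
  set q : ∀ n, (∀ m, Z n m) → ℝ := fun n t =>
    ∏ m, (∑ t' : ∀ m', Z n m', if t' m = t m then p n t' else 0) with hq
  have hq0 : ∀ n t, 0 ≤ q n t := fun n t =>
    Finset.prod_nonneg fun m _ => Finset.sum_nonneg fun t' _ => by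
      split <;> [exact hp0 n t'; exact le_rfl]
  have hqsum : ∀ n, ∑ t, q n t = 1 := by
    intro n
    have : ∑ t : ∀ m, Z n m, q n t
        = ∏ m, ∑ x : Z n m, (∑ t' : ∀ m', Z n m', if t' m = x then p n t' else 0) := by
      rw [Fintype.prod_sum]
    rw [this]
    have h1 : ∀ m : ι, (∑ x : Z n m, ∑ t' : ∀ m', Z n m', if t' m = x then p n t' else 0) = 1 := by
      intro m
      rw [Finset.sum_comm]
      have : ∀ t' : ∀ m', Z n m',
          (∑ x : Z n m, if t' m = x then p n t' else 0) = p n t' := by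
        intro t'
        simp [Finset.sum_ite_eq]
      simp only [this, hp1 n]
    simp [h1]
  -- the key claim: every negative real is in the set
  have key : ∀ a : ℝ, a < 0 →
      Tendsto (fun n => ∑ x : ∀ m, Z n m,
        if (1 / (n : ℝ)) * Real.log (p n x / q n x) < a then p n x else 0)
        atTop (nhds 0) := by
    intro a ha
    have h1 : ∀ᶠ n in atTop, 0 ≤ ∑ x : ∀ m, Z n m,
        if (1 / (n : ℝ)) * Real.log (p n x / q n x) < a then p n x else 0 :=
      Eventually.of_forall fun n =>
        Finset.sum_nonneg fun x _ => by split <;> [exact hp0 n x; exact le_rfl]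
    have h2 : ∀ᶠ n in atTop, (∑ x : ∀ m, Z n m,
        if (1 / (n : ℝ)) * Real.log (p n x / q n x) < a then p n x else 0)
        ≤ Real.exp ((n : ℝ) * a) := by
      filter_upwards [eventually_ge_atTop 1] with n hn
      have hn' : (0 : ℝ) < (n : ℝ) := by exact_mod_cast hn
      calc (∑ x : ∀ m, Z n m,
            if (1 / (n : ℝ)) * Real.log (p n x / q n x) < a then p n x else 0)
          ≤ ∑ x : ∀ m, Z n m, Real.exp ((n : ℝ) * a) * q n x := by
            apply Finset.sum_le_sum
            intro x _
            split
            · rename_i h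
              rcases eq_or_lt_of_le (hp0 n x) with hp | hp
              · rw [← hp]
                exact mul_nonneg (Real.exp_pos _).le (hq0 n x)
              · rcases eq_or_lt_of_le (hq0 n x) with hqx | hqx
                · exfalso
                  rw [← hqx, div_zero, Real.log_zero, mul_zero] at h
                  linarith
                · have hL : Real.log (p n x / q n x) < (n : ℝ) * a := by
                    have := (mul_lt_mul_iff_right₀ hn').mpr h
                    rw [← mul_assoc, mul_one_div, div_self (ne_of_gt hn'), one_mul] at this
                    linarith [this]
                  have hpos : 0 < p n x / q n x := div_pos hp hqx
                  have := Real.exp_lt_exp.mpr hL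
                  rw [Real.exp_log hpos] at this
                  calc p n x = (p n x / q n x) * q n x := by field_simp
                    _ ≤ Real.exp ((n : ℝ) * a) * q n x :=
                        mul_le_mul_of_nonneg_right (le_of_lt this) (hq0 n x)
            · exact mul_nonneg (Real.exp_pos _).le (hq0 n x)
        _ = Real.exp ((n : ℝ) * a) := by
            rw [← Finset.mul_sum, hqsum n, mul_one]
    have h3 : Tendsto (fun n : ℕ => Real.exp ((n : ℝ) * a)) atTop (nhds 0) :=
      Real.tendsto_exp_atBot.comp
        (Tendsto.atTop_mul_const_of_neg ha tendsto_natCast_atTop_atTop)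
    exact squeeze_zero' h1 h2 h3
  -- conclude: sSup is ≥ 0
  unfold pLimInfP
  by_contra hcon
  push_neg at hcon
  obtain ⟨c, hc1, hc2⟩ := EReal.exists_between_coe_real hcon
  have hc0 : c < 0 := by exact_mod_cast hc2
  have hmem : Real.toEReal c ∈ Real.toEReal '' {a : ℝ |
      Tendsto (fun n => ∑ x : ∀ m, Z n m,
        if (1 / (n : ℝ)) * Real.log (p n x / ∏ m,
          (∑ t' : ∀ m', Z n m', if t' m = x m then p n t' else 0)) < a
        then p n x else 0) atTop (nhds 0)} :=
    Set.mem_image_of_mem _ (key c hc0)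
  exact absurd (le_sSup hmem) (not_le.mpr hc1)
end

section
/- Mixture source bound for p-limsup: let P_{W_n} = α P_{W_n^α} + β P_{W_n^β} be a mixture of two distributions with constants α, β > 0, α + β = 1, and let g_n be real-valued functions on the common alphabet. Then p-limsup g_n(W_n) = max{ p-limsup g_n(W_n^α), p-limsup g_n(W_n^β) }. -/
open Filter

/-- Limit superior in probability for random variables on finite alphabets. -/
noncomputable def pLimSupP {α : ℕ → Type} [∀ n, Fintype (α n)]
    (p : ∀ n, α n → ℝ) (Z : ∀ n, α n → ℝ) : EReal :=
  sInf (Real.toEReal '' {a : ℝ |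
    Tendsto (fun n => ∑ x : α n, if a < Z n x then p n x else 0) atTop (nhds 0)})

lemma aux_sum_nonneg {γ : Type} [Fintype γ] (p : γ → ℝ) (hp : ∀ x, 0 ≤ p x)
    (P : γ → Prop) [DecidablePred P] :
    0 ≤ ∑ x : γ, if P x then p x else 0 :=
  Finset.sum_nonneg fun x _ => by split_ifs; exacts [hp x, le_rfl]

lemma aux_upward {W : ℕ → Type} [∀ n, Fintype (W n)]
    (p : ∀ n, W n → ℝ) (hp0 : ∀ n w, 0 ≤ p n w) (g : ∀ n, W n → ℝ)
    {a b : ℝ} (hab : a ≤ b)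
    (ha : Tendsto (fun n => ∑ x : W n, if a < g n x then p n x else 0) atTop (nhds 0)) :
    Tendsto (fun n => ∑ x : W n, if b < g n x then p n x else 0) atTop (nhds 0) := by
  apply squeeze_zero (fun n => aux_sum_nonneg _ (hp0 n) _) _ ha
  intro n
  apply Finset.sum_le_sum
  intro x _
  by_cases h : b < g n x
  · simp [h, lt_of_le_of_lt hab h]
  · simp only [h, if_false]
    by_cases h2 : a < g n x <;> simp [h2, hp0]

/-- for a mixed source `P_{W_n} = α P_{W_n^α} + β P_{W_n^β}` with
constant weights `α, β > 0`, `α + β = 1`,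
`p-limsup g_n(W_n) = max{p-limsup g_n(W_n^α), p-limsup g_n(W_n^β)}`. -/
theorem stmt_18 {W : ℕ → Type} [∀ n, Fintype (W n)]
    (pa pb : ∀ n, W n → ℝ)
    (hpa0 : ∀ n w, 0 ≤ pa n w) (hpa1 : ∀ n, ∑ w, pa n w = 1)
    (hpb0 : ∀ n w, 0 ≤ pb n w) (hpb1 : ∀ n, ∑ w, pb n w = 1)
    (α β : ℝ) (hα : 0 < α) (hβ : 0 < β) (hαβ : α + β = 1)
    (g : ∀ n, W n → ℝ) :
    pLimSupP (fun n w => α * pa n w + β * pb n w) g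
      = max (pLimSupP pa g) (pLimSupP pb g) := by
  have hm0 : ∀ n w, 0 ≤ α * pa n w + β * pb n w := fun n w => by
    have := hpa0 n w; have := hpb0 n w; positivity
  set A : Set ℝ := {a : ℝ |
    Tendsto (fun n => ∑ x : W n, if a < g n x then pa n x else 0) atTop (nhds 0)} with hA
  set B : Set ℝ := {a : ℝ |
    Tendsto (fun n => ∑ x : W n, if a < g n x then pb n x else 0) atTop (nhds 0)} with hB
  have hS : {a : ℝ | Tendsto
      (fun n => ∑ x : W n, if a < g n x then α * pa n x + β * pb n x else 0)
      atTop (nhds 0)} = A ∩ B := by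
    ext a
    have hsplit : ∀ n, (∑ x : W n, if a < g n x then α * pa n x + β * pb n x else 0)
        = α * (∑ x : W n, if a < g n x then pa n x else 0)
          + β * (∑ x : W n, if a < g n x then pb n x else 0) := by
      intro n
      rw [Finset.mul_sum, Finset.mul_sum, ← Finset.sum_add_distrib]
      exact Finset.sum_congr rfl fun x _ => by by_cases h : a < g n x <;> simp [h]
    constructor
    · intro h
      have hmix : Tendsto
          (fun n => ∑ x : W n, if a < g n x then α * pa n x + β * pb n x else 0)
          atTop (nhds 0) := h
      constructor
      · refine squeeze_zero (fun n => aux_sum_nonneg _ (hpa0 n) _)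
          (g := fun n => α⁻¹ * (∑ x : W n, if a < g n x then α * pa n x + β * pb n x else 0))
          (fun n => ?_) (by simpa using hmix.const_mul α⁻¹)
        show _ ≤ α⁻¹ * _
        rw [hsplit n, mul_add, ← mul_assoc, inv_mul_cancel₀ hα.ne', one_mul,
          le_add_iff_nonneg_right]
        have h1 := aux_sum_nonneg (pb n) (hpb0 n) (fun x => a < g n x)
        positivity
      · refine squeeze_zero (fun n => aux_sum_nonneg _ (hpb0 n) _)
          (g := fun n => β⁻¹ * (∑ x : W n, if a < g n x then α * pa n x + β * pb n x else 0))
          (fun n => ?_) (by simpa using hmix.const_mul β⁻¹)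
        show _ ≤ β⁻¹ * _
        rw [hsplit n, mul_add, ← mul_assoc β⁻¹ β, inv_mul_cancel₀ hβ.ne', one_mul,
          add_comm, le_add_iff_nonneg_right]
        have h1 := aux_sum_nonneg (pa n) (hpa0 n) (fun x => a < g n x)
        positivity
    · rintro ⟨h1, h2⟩
      have : Tendsto (fun n => α * (∑ x : W n, if a < g n x then pa n x else 0)
          + β * (∑ x : W n, if a < g n x then pb n x else 0)) atTop (nhds 0) := by
        simpa using (h1.const_mul α).add (h2.const_mul β)
      exact Tendsto.congr (fun n => (hsplit n).symm) this
  show sInf (Real.toEReal '' _) = max (sInf _) (sInf _)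
  rw [hS]
  apply le_antisymm
  · refine le_of_forall_gt_imp_ge_of_dense fun c hc => ?_
    rw [max_lt_iff] at hc
    obtain ⟨a, ⟨a', ha', rfl⟩, hac⟩ := sInf_lt_iff.mp hc.1
    obtain ⟨b, ⟨b', hb', rfl⟩, hbc⟩ := sInf_lt_iff.mp hc.2
    have hmem : max a' b' ∈ A ∩ B :=
      ⟨aux_upward pa hpa0 g (le_max_left a' b') ha',
       aux_upward pb hpb0 g (le_max_right a' b') hb'⟩
    calc sInf (Real.toEReal '' (A ∩ B)) ≤ Real.toEReal (max a' b') :=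
          sInf_le ⟨max a' b', hmem, rfl⟩
      _ ≤ c := by
          rcases max_cases a' b' with ⟨h, _⟩ | ⟨h, _⟩
          · rw [h]; exact hac.le
          · rw [h]; exact hbc.le
  · rw [max_le_iff]
    exact ⟨sInf_le_sInf (Set.image_mono  Set.inter_subset_left),
      sInf_le_sInf (Set.image_mono  Set.inter_subset_right)⟩
end
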